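/- Assume 2 is a non-zero-divisor in k. Then the centralizer of ker ∂ in R equals the k-subalgebra C generated by x₁² and x₂²: {c ∈ R : a·c = c·a for all a ∈ ker ∂} = C. Consequently, every additive map ξ : R → R that is left R^s-linear (ξ(a·m) = a·ξ(m) for all a ∈ ker ∂, m ∈ R) and right R-linear (ξ(m·r) = ξ(m)·r for all m, r ∈ R) is left multiplication by a unique element of C; that is, the endomorphisms of R as an (R^s, R)-bimodule are in bijection with elements of the center of R. -/

import Mathlib

/-- The anticommutation relation `x₁x₂ + x₂x₁ = 0` on the free `k`-algebra
on two generators. -/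
inductive OddRel (k : Type*) [CommRing k] :
    FreeAlgebra k (Fin 2) → FreeAlgebra k (Fin 2) → Prop
  | anticomm : OddRel k
      (FreeAlgebra.ι k (0 : Fin 2) * FreeAlgebra.ι k (1 : Fin 2) +
        FreeAlgebra.ι k (1 : Fin 2) * FreeAlgebra.ι k (0 : Fin 2)) 0

/-- The `k`-algebra of skew polynomials in two variables,
`R = k⟨x₁,x₂⟩/(x₁x₂ + x₂x₁)`. -/
abbrev OddPoly (k : Type*) [CommRing k] := RingQuot (OddRel k)

/-- The generators `x₁ = X k 0` and `x₂ = X k 1` of `R`. -/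
noncomputable def X (k : Type*) [CommRing k] (i : Fin 2) : OddPoly k :=
  RingQuot.mkAlgHom k (OddRel k) (FreeAlgebra.ι k i)

namespace Stmt11Aux

variable (k : Type*) [CommRing k]

local notation "Pk" => MvPolynomial (Fin 2) k

/-- sign automorphism flipping the first variable -/
noncomputable def sg : Pk →ₐ[k] Pk :=
  MvPolynomial.aeval ![-MvPolynomial.X 0, MvPolynomial.X 1]

/-- sign automorphism flipping the second variable -/
noncomputable def tg : Pk →ₐ[k] Pk :=
  MvPolynomial.aeval ![MvPolynomial.X 0, -MvPolynomial.X 1]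

@[simp] lemma sg_X0 : sg k (MvPolynomial.X 0) = -MvPolynomial.X 0 := by
  simp [sg]

@[simp] lemma sg_X1 : sg k (MvPolynomial.X 1) = MvPolynomial.X 1 := by
  simp [sg]

@[simp] lemma tg_X0 : tg k (MvPolynomial.X 0) = MvPolynomial.X 0 := by
  simp [tg]

@[simp] lemma tg_X1 : tg k (MvPolynomial.X 1) = -MvPolynomial.X 1 := by
  simp [tg]

noncomputable def M1 : Module.End k Pk := LinearMap.mulLeft k (MvPolynomial.X 0)

noncomputable def M2 : Module.End k Pk :=
  (LinearMap.mulLeft k (MvPolynomial.X (1 : Fin 2))).comp (sg k).toLinearMap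

@[simp] lemma M1_apply (p : Pk) : M1 k p = MvPolynomial.X 0 * p := rfl

@[simp] lemma M2_apply (p : Pk) : M2 k p = MvPolynomial.X 1 * sg k p := rfl

/-- the representation of `OddPoly k` on `Pk` -/
noncomputable def rho : OddPoly k →ₐ[k] Module.End k Pk :=
  RingQuot.liftAlgHom k ⟨FreeAlgebra.lift k ![M1 k, M2 k], by
    rintro a b ⟨⟩
    rw [map_add, map_mul, map_mul, map_zero, FreeAlgebra.lift_ι_apply,
      FreeAlgebra.lift_ι_apply]
    refine LinearMap.ext fun p => ?_
    simp only [Matrix.cons_val_zero, Matrix.cons_val_one, Matrix.head_cons,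
      LinearMap.add_apply, Module.End.mul_apply, M1_apply, M2_apply, map_mul, sg_X0,
      LinearMap.zero_apply]
    ring⟩

@[simp] lemma rho_X0 : rho k (X k 0) = M1 k := by
  rw [X, rho, RingQuot.liftAlgHom_mkAlgHom_apply, FreeAlgebra.lift_ι_apply]
  simp

@[simp] lemma rho_X1 : rho k (X k 1) = M2 k := by
  rw [X, rho, RingQuot.liftAlgHom_mkAlgHom_apply, FreeAlgebra.lift_ι_apply]
  simp

/-- evaluation at 1 -/
noncomputable def evL : OddPoly k →ₗ[k] Pk where
  toFun r := rho k r 1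
  map_add' a b := by simp [map_add]
  map_smul' c a := by simp [map_smul]

lemma evL_mul (r r' : OddPoly k) : evL k (r * r') = rho k r (evL k r') := by
  simp [evL, map_mul, Module.End.mul_apply]

/-- basis monomials of `OddPoly k` -/
noncomputable def mon (d : Fin 2 →₀ ℕ) : OddPoly k := X k 0 ^ d 0 * X k 1 ^ d 1

/-- the linear "monomial lift" `Pk → OddPoly k` -/
noncomputable def Psi : Pk →ₗ[k] OddPoly k :=
  (Finsupp.linearCombination k (mon k)).comp (AddMonoidAlgebra.coeffLinearEquiv k).toLinearMap

lemma Psi_monomial (d : Fin 2 →₀ ℕ) (c : k) :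
    Psi k (MvPolynomial.monomial d c) = c • mon k d :=
  by rw [Psi, LinearMap.comp_apply]; exact Finsupp.linearCombination_single k c d

-- basic relations in OddPoly
lemma anticomm_R : X k 0 * X k 1 + X k 1 * X k 0 = 0 := by
  have h := RingQuot.mkAlgHom_rel k (OddRel.anticomm (k := k))
  simpa [X, map_add, map_mul] using h

lemma comm10 : X k 1 * X k 0 = -(X k 0 * X k 1) :=
  eq_neg_of_add_eq_zero_right (anticomm_R k)

lemma comm01 : X k 0 * X k 1 = -(X k 1 * X k 0) :=
  eq_neg_of_add_eq_zero_left (anticomm_R k)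

lemma comm10' : X k 1 * X k 0 = ((-1 : k)) • (X k 0 * X k 1) := by
  rw [comm10]; exact (neg_one_smul k _).symm

lemma sign_smul (a : ℕ) (v : OddPoly k) :
    ((-1 : k) ^ a) • v = (-1 : OddPoly k) ^ a * v := by
  rw [Algebra.smul_def, map_pow, map_neg, map_one]

/-- `x₁ x₀^a = (-1)^a x₀^a x₁` -/
lemma x1_mul_x0pow (a : ℕ) :
    X k 1 * X k 0 ^ a = ((-1 : k) ^ a) • (X k 0 ^ a * X k 1) := by
  induction a with
  | zero => simp
  | succ n ih =>
    rw [pow_succ, ← mul_assoc, ih, smul_mul_assoc, mul_assoc, comm10', mul_smul_comm,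
      smul_smul, ← pow_succ, ← mul_assoc]

/-- `x₁^b x₀ = (-1)^b x₀ x₁^b` -/
lemma x1pow_mul_x0 (b : ℕ) :
    X k 1 ^ b * X k 0 = ((-1 : k) ^ b) • (X k 0 * X k 1 ^ b) := by
  induction b with
  | zero => simp
  | succ n ih =>
    rw [pow_succ', mul_assoc, ih, mul_smul_comm, ← mul_assoc, comm10', smul_mul_assoc,
      smul_smul, ← pow_succ, mul_assoc]

lemma single_add_apply_00 (d : Fin 2 →₀ ℕ) :
    (Finsupp.single (0 : Fin 2) (1 : ℕ) + d) (0 : Fin 2) = d 0 + 1 := by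
  rw [Finsupp.add_apply, Finsupp.single_eq_same, add_comm]

lemma single_add_apply_01 (d : Fin 2 →₀ ℕ) :
    (Finsupp.single (0 : Fin 2) (1 : ℕ) + d) (1 : Fin 2) = d 1 := by
  rw [Finsupp.add_apply, Finsupp.single_eq_of_ne (by decide), zero_add]

lemma single_add_apply_10 (d : Fin 2 →₀ ℕ) :
    (Finsupp.single (1 : Fin 2) (1 : ℕ) + d) (0 : Fin 2) = d 0 := by
  rw [Finsupp.add_apply, Finsupp.single_eq_of_ne (by decide), zero_add]

lemma single_add_apply_11 (d : Fin 2 →₀ ℕ) :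
    (Finsupp.single (1 : Fin 2) (1 : ℕ) + d) (1 : Fin 2) = d 1 + 1 := by
  rw [Finsupp.add_apply, Finsupp.single_eq_same, add_comm]

lemma x0_mul_mon (d : Fin 2 →₀ ℕ) :
    X k 0 * mon k d = mon k (Finsupp.single 0 1 + d) := by
  rw [mon, mon, single_add_apply_00, single_add_apply_01, pow_succ']
  rw [mul_assoc]

lemma x1_mul_mon (d : Fin 2 →₀ ℕ) :
    X k 1 * mon k d = ((-1 : k) ^ (d 0)) • mon k (Finsupp.single 1 1 + d) := by
  rw [mon, mon, single_add_apply_10, single_add_apply_11, ← mul_assoc, x1_mul_x0pow,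
    smul_mul_assoc, pow_succ, mul_assoc, pow_mul_comm']

lemma mon_mul_x0 (d : Fin 2 →₀ ℕ) :
    mon k d * X k 0 = ((-1 : k) ^ (d 1)) • mon k (Finsupp.single 0 1 + d) := by
  rw [mon, mon, single_add_apply_00, single_add_apply_01, mul_assoc, x1pow_mul_x0,
    mul_smul_comm, pow_succ', ← mul_assoc, pow_mul_comm']

lemma mon_mul_x1 (d : Fin 2 →₀ ℕ) :
    mon k d * X k 1 = mon k (Finsupp.single 1 1 + d) := by
  rw [mon, mon, single_add_apply_10, single_add_apply_11, mul_assoc, pow_succ]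

lemma X_mul_monomial (i : Fin 2) (d : Fin 2 →₀ ℕ) (c : k) :
    (MvPolynomial.X i : Pk) * MvPolynomial.monomial d c =
      MvPolynomial.monomial (Finsupp.single i 1 + d) c := by
  rw [← pow_one (MvPolynomial.X i : Pk), MvPolynomial.X_pow_eq_monomial,
    MvPolynomial.monomial_mul, one_mul]

/-- `monomial d c = c • X₀^{d 0} X₁^{d 1}` in `Pk` -/
lemma monomial_eq2 (d : Fin 2 →₀ ℕ) (c : k) :
    (MvPolynomial.monomial d c : Pk) =
      c • (MvPolynomial.X 0 ^ d 0 * MvPolynomial.X 1 ^ d 1) := by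
  rw [MvPolynomial.monomial_eq]
  rw [Finsupp.prod_fintype d (fun i e => (MvPolynomial.X i : Pk) ^ e) (fun i => pow_zero _)]
  rw [Fin.prod_univ_two]
  rw [MvPolynomial.C_mul']

lemma sg_monomial (d : Fin 2 →₀ ℕ) (c : k) :
    sg k (MvPolynomial.monomial d c) = ((-1 : k) ^ (d 0)) • MvPolynomial.monomial d c := by
  rw [monomial_eq2, map_smul, map_mul, map_pow, map_pow, sg_X0, sg_X1]
  rw [neg_pow]
  have hC : ∀ e : ℕ, ((-1 : Pk) ^ e) = MvPolynomial.C ((-1 : k) ^ e) := fun e => by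
    rw [map_pow, map_neg, map_one]
  rw [hC (d 0), mul_assoc, MvPolynomial.C_mul']
  rw [smul_comm]

lemma tg_monomial (d : Fin 2 →₀ ℕ) (c : k) :
    tg k (MvPolynomial.monomial d c) = ((-1 : k) ^ (d 1)) • MvPolynomial.monomial d c := by
  rw [monomial_eq2, map_smul, map_mul, map_pow, map_pow, tg_X0, tg_X1]
  rw [neg_pow]
  have hC : ∀ e : ℕ, ((-1 : Pk) ^ e) = MvPolynomial.C ((-1 : k) ^ e) := fun e => by
    rw [map_pow, map_neg, map_one]
  rw [hC (d 1), mul_comm (MvPolynomial.X 0 ^ d 0), mul_assoc, MvPolynomial.C_mul']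
  rw [smul_comm]
  rw [mul_comm]

lemma coeff_sg (d : Fin 2 →₀ ℕ) (p : Pk) :
    MvPolynomial.coeff d (sg k p) = (-1 : k) ^ (d 0) * MvPolynomial.coeff d p := by
  induction p using MvPolynomial.induction_on' with
  | monomial e c =>
    rw [sg_monomial, MvPolynomial.coeff_smul, MvPolynomial.coeff_monomial]
    by_cases h : e = d
    · subst h; simp [smul_eq_mul]
    · simp [h]
  | add p q hp hq => simp [hp, hq]; ring

lemma coeff_tg (d : Fin 2 →₀ ℕ) (p : Pk) :
    MvPolynomial.coeff d (tg k p) = (-1 : k) ^ (d 1) * MvPolynomial.coeff d p := by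
  induction p using MvPolynomial.induction_on' with
  | monomial e c =>
    rw [tg_monomial, MvPolynomial.coeff_smul, MvPolynomial.coeff_monomial]
    by_cases h : e = d
    · subst h; simp [smul_eq_mul]
    · simp [h]
  | add p q hp hq => simp [hp, hq]; ring

-- evaluation computations
lemma M2_pow_one (b : ℕ) : (M2 k ^ b) 1 = (MvPolynomial.X 1 : Pk) ^ b := by
  induction b with
  | zero => simp
  | succ n ih => rw [pow_succ', Module.End.mul_apply, ih, M2_apply, map_pow, sg_X1, pow_succ']

lemma M1_pow (a : ℕ) (v : Pk) : (M1 k ^ a) v = (MvPolynomial.X 0 : Pk) ^ a * v := by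
  induction a with
  | zero => simp
  | succ n ih => rw [pow_succ', Module.End.mul_apply, ih, M1_apply, ← mul_assoc, ← pow_succ']

lemma evL_mon (d : Fin 2 →₀ ℕ) : evL k (mon k d) = MvPolynomial.monomial d 1 := by
  have : evL k (mon k d) = (M1 k ^ d 0) ((M2 k ^ d 1) 1) := by
    simp only [evL, mon, LinearMap.coe_mk, AddHom.coe_mk, map_mul, map_pow, rho_X0, rho_X1,
      Module.End.mul_apply]
  rw [this, M2_pow_one, M1_pow, monomial_eq2, one_smul]

lemma evL_Psi (p : Pk) : evL k (Psi k p) = p := by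
  induction p using MvPolynomial.induction_on' with
  | monomial d c =>
    rw [Psi_monomial, map_smul, evL_mon, MvPolynomial.smul_monomial, smul_eq_mul, mul_one]
  | add p q hp hq => rw [map_add, map_add, hp, hq]

-- multiplication formulas through Psi
lemma psi_mulL0 (p : Pk) : X k 0 * Psi k p = Psi k (MvPolynomial.X 0 * p) := by
  induction p using MvPolynomial.induction_on' with
  | monomial d c =>
    rw [Psi_monomial, mul_smul_comm, x0_mul_mon, X_mul_monomial, Psi_monomial]
  | add p q hp hq => rw [map_add, mul_add, hp, hq, mul_add, map_add]

lemma psi_mulL1 (p : Pk) : X k 1 * Psi k p = Psi k (MvPolynomial.X 1 * sg k p) := by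
  induction p using MvPolynomial.induction_on' with
  | monomial d c =>
    rw [Psi_monomial, mul_smul_comm, x1_mul_mon, sg_monomial, mul_smul_comm, map_smul, X_mul_monomial, Psi_monomial,
      smul_comm ((-1 : k) ^ (d 0)) c]
  | add p q hp hq => rw [map_add, mul_add, hp, hq, map_add, mul_add, map_add]

lemma psi_mulR0 (p : Pk) : Psi k p * X k 0 = Psi k (MvPolynomial.X 0 * tg k p) := by
  induction p using MvPolynomial.induction_on' with
  | monomial d c =>
    rw [Psi_monomial, smul_mul_assoc, mon_mul_x0, tg_monomial, mul_smul_comm, map_smul, X_mul_monomial, Psi_monomial,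
      smul_comm ((-1 : k) ^ (d 1)) c]
  | add p q hp hq => rw [map_add, add_mul, hp, hq, map_add, mul_add, map_add]

lemma psi_mulR1 (p : Pk) : Psi k p * X k 1 = Psi k (MvPolynomial.X 1 * p) := by
  induction p using MvPolynomial.induction_on' with
  | monomial d c =>
    rw [Psi_monomial, smul_mul_assoc, mon_mul_x1, X_mul_monomial, Psi_monomial]
  | add p q hp hq => rw [map_add, add_mul, hp, hq, mul_add, map_add]

-- surjectivity of Psi
lemma psi_surjective : Function.Surjective (Psi k) := by
  intro r
  obtain ⟨y, rfl⟩ := RingQuot.mkAlgHom_surjective k (OddRel k) r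
  induction y using FreeAlgebra.induction with
  | grade0 c =>
    refine ⟨MvPolynomial.C c, ?_⟩
    rw [AlgHom.commutes]
    have : (MvPolynomial.C c : Pk) = MvPolynomial.monomial 0 c := MvPolynomial.C_apply
    rw [this, Psi_monomial]
    rw [mon]
    simp [Algebra.algebraMap_eq_smul_one]
  | grade1 i =>
    refine ⟨MvPolynomial.X i, ?_⟩
    have : (MvPolynomial.X i : Pk) = MvPolynomial.monomial (Finsupp.single i 1) 1 := rfl
    rw [this, Psi_monomial, one_smul, mon]
    fin_cases i <;> simp [X, Finsupp.single_apply]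
  | mul a b ha hb =>
    obtain ⟨p, hp⟩ := ha
    obtain ⟨q, hq⟩ := hb
    rw [map_mul, ← hp, ← hq]
    -- show Psi p * Psi q is in the range
    clear hp hq
    induction p using MvPolynomial.induction_on' with
    | monomial d c =>
      rw [Psi_monomial, smul_mul_assoc]
      -- mon d * Psi q
      have key : ∀ (d : Fin 2 →₀ ℕ), ∃ u, mon k d * Psi k q = Psi k u := by
        intro d
        rw [mon]
        -- first x1 ^ b * Psi q
        have h1 : ∀ b : ℕ, ∃ u, X k 1 ^ b * Psi k q = Psi k u := by
          intro b
          induction b with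
          | zero => exact ⟨q, by simp⟩
          | succ n ih =>
            obtain ⟨u, hu⟩ := ih
            exact ⟨MvPolynomial.X 1 * sg k u, by
              rw [pow_succ', mul_assoc, hu, psi_mulL1]⟩
        obtain ⟨u, hu⟩ := h1 (d 1)
        have h0 : ∀ a : ℕ, ∃ w, X k 0 ^ a * Psi k u = Psi k w := by
          intro a
          induction a with
          | zero => exact ⟨u, by simp⟩
          | succ n ih =>
            obtain ⟨w, hw⟩ := ih
            exact ⟨MvPolynomial.X 0 * w, by
              rw [pow_succ', mul_assoc, hw, psi_mulL0]⟩
        obtain ⟨w, hw⟩ := h0 (d 0)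
        exact ⟨w, by rw [mul_assoc, hu, hw]⟩
      obtain ⟨u, hu⟩ := key d
      exact ⟨c • u, by rw [hu, map_smul]⟩
    | add p1 p2 h1 h2 =>
      obtain ⟨u1, hu1⟩ := h1
      obtain ⟨u2, hu2⟩ := h2
      exact ⟨u1 + u2, by rw [map_add, map_add, add_mul, hu1, hu2]⟩
  | add a b ha hb =>
    obtain ⟨p, hp⟩ := ha
    obtain ⟨q, hq⟩ := hb
    exact ⟨p + q, by rw [map_add, map_add, hp, hq]⟩

-- injectivity helpers in Pk
lemma mulX_inj (i : Fin 2) (q : Pk) (h : MvPolynomial.X i * q = 0) : q = 0 := by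
  ext d
  have := congrArg (MvPolynomial.coeff (Finsupp.single i 1 + d)) h
  rwa [MvPolynomial.coeff_X_mul, MvPolynomial.coeff_zero] at this

lemma mulX0X1_cancel (q : Pk)
    (h : MvPolynomial.X 0 * (MvPolynomial.X 1 * q) = 0) : q = 0 :=
  mulX_inj k 1 q (mulX_inj k 0 _ h)

lemma mulX0addX1_cancel (q : Pk)
    (h : (MvPolynomial.X 0 + MvPolynomial.X 1) * q = 0) : q = 0 := by
  set φ : Pk →ₐ[k] Pk :=
    MvPolynomial.aeval ![MvPolynomial.X 0 - MvPolynomial.X 1, MvPolynomial.X 1] with hφ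
  set ψ : Pk →ₐ[k] Pk :=
    MvPolynomial.aeval ![MvPolynomial.X 0 + MvPolynomial.X 1, MvPolynomial.X 1] with hψ
  have hcomp : ψ.comp φ = AlgHom.id k Pk := by
    apply MvPolynomial.algHom_ext
    intro i
    fin_cases i <;> simp [hφ, hψ]
  have h1 : MvPolynomial.X 0 * φ q = 0 := by
    have := congrArg φ h
    rw [map_mul, map_zero, map_add] at this
    simp only [hφ, MvPolynomial.aeval_X, Matrix.cons_val_zero, Matrix.cons_val_one,
      Matrix.head_cons] at this
    rw [sub_add_cancel] at this
    simpa [hφ] using this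
  have h2 : φ q = 0 := mulX_inj k 0 _ h1
  have := congrArg ψ h2
  rw [map_zero] at this
  have h3 : ψ (φ q) = q := by
    simpa using DFunLike.congr_fun hcomp q
  rw [← h3, this]

-- OddPoly-native instances versions of generic lemmas
lemma sub_mul'' (a b c : OddPoly k) : (a - b) * c = a * c - b * c := sub_mul a b c

lemma mul_sub'' (a b c : OddPoly k) : a * (b - c) = a * b - a * c := mul_sub a b c

lemma psi_sub (p q : Pk) : Psi k (p - q) = Psi k p - Psi k q := map_sub _ _ _

lemma comm01' : X k 0 * X k 1 = ((-1 : k)) • (X k 1 * X k 0) := by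
  rw [comm01]; exact (neg_one_smul k _).symm

lemma neg_one_mul_neg_one : ((-1 : k) * (-1)) = 1 := by norm_num

lemma sq0_comm_x1 : X k 0 ^ 2 * X k 1 = X k 1 * X k 0 ^ 2 := by
  rw [pow_two, mul_assoc, comm01', mul_smul_comm, ← mul_assoc, comm01', smul_mul_assoc,
    smul_smul, neg_one_mul_neg_one, one_smul, mul_assoc]

lemma sq1_comm_x0 : X k 1 ^ 2 * X k 0 = X k 0 * X k 1 ^ 2 := by
  rw [pow_two, mul_assoc, comm10', mul_smul_comm, ← mul_assoc, comm10', smul_mul_assoc,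
    smul_smul, neg_one_mul_neg_one, one_smul, mul_assoc]

lemma commute_sq0 (r : OddPoly k) : X k 0 ^ 2 * r = r * X k 0 ^ 2 := by
  obtain ⟨y, rfl⟩ := RingQuot.mkAlgHom_surjective k (OddRel k) r
  induction y using FreeAlgebra.induction with
  | grade0 c => rw [AlgHom.commutes]; exact (Algebra.commutes c _).symm
  | grade1 i =>
    fin_cases i
    · exact ((Commute.refl (X k 0)).pow_left 2).eq
    · exact sq0_comm_x1 k
  | mul a b ha hb => rw [map_mul, ← mul_assoc, ha, mul_assoc, hb, ← mul_assoc]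
  | add a b ha hb => rw [map_add, mul_add, ha, hb, add_mul]

lemma commute_sq1 (r : OddPoly k) : X k 1 ^ 2 * r = r * X k 1 ^ 2 := by
  obtain ⟨y, rfl⟩ := RingQuot.mkAlgHom_surjective k (OddRel k) r
  induction y using FreeAlgebra.induction with
  | grade0 c => rw [AlgHom.commutes]; exact (Algebra.commutes c _).symm
  | grade1 i =>
    fin_cases i
    · exact sq1_comm_x0 k
    · exact ((Commute.refl (X k 1)).pow_left 2).eq
  | mul a b ha hb => rw [map_mul, ← mul_assoc, ha, mul_assoc, hb, ← mul_assoc]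
  | add a b ha hb => rw [map_add, mul_add, ha, hb, add_mul]

lemma adjoin_sub_center :
    Algebra.adjoin k ({X k 0 ^ 2, X k 1 ^ 2} : Set (OddPoly k)) ≤
      Subalgebra.center k (OddPoly k) := by
  apply Algebra.adjoin_le
  intro a ha
  rcases ha with rfl | ha
  · exact Subalgebra.mem_center_iff.mpr fun b => (commute_sq0 k b).symm
  · rw [Set.mem_singleton_iff] at ha
    subst ha
    exact Subalgebra.mem_center_iff.mpr fun b => (commute_sq1 k b).symm

set_option maxHeartbeats 1000000 in
/-- the key forward containment -/
lemma forward (h2 : ∀ a : k, 2 * a = 0 → a = 0) (c : OddPoly k)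
    (hA : (X k 0 * X k 1) * c = c * (X k 0 * X k 1))
    (hB : (X k 0 - X k 1) * c = c * (X k 0 - X k 1)) :
    c ∈ Algebra.adjoin k ({X k 0 ^ 2, X k 1 ^ 2} : Set (OddPoly k)) := by
  obtain ⟨p, rfl⟩ := psi_surjective k c
  -- condition A in Pk
  have l1 : (X k 0 * X k 1) * Psi k p =
      Psi k (MvPolynomial.X 0 * (MvPolynomial.X 1 * sg k p)) := by
    rw [mul_assoc, psi_mulL1, psi_mulL0]
  have l1' : Psi k p * (X k 0 * X k 1) =
      Psi k (MvPolynomial.X 1 * (MvPolynomial.X 0 * tg k p)) := by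
    rw [← mul_assoc, psi_mulR0, psi_mulR1]
  have eA : MvPolynomial.X 0 * (MvPolynomial.X 1 * sg k p) =
      MvPolynomial.X 1 * (MvPolynomial.X 0 * tg k p) := by
    have h := congrArg (evL k) ((l1.symm.trans hA).trans l1')
    rwa [evL_Psi, evL_Psi] at h
  have hst : sg k p = tg k p := by
    have h0 : MvPolynomial.X 0 * (MvPolynomial.X 1 * (sg k p - tg k p)) = 0 := by
      linear_combination eA
    exact sub_eq_zero.mp (mulX0X1_cancel k _ h0)
  -- condition B in Pk
  have l2 : (X k 0 - X k 1) * Psi k p =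
      Psi k (MvPolynomial.X 0 * p - MvPolynomial.X 1 * sg k p) := by
    rw [sub_mul'', psi_mulL0, psi_mulL1, ← psi_sub]
  have l2' : Psi k p * (X k 0 - X k 1) =
      Psi k (MvPolynomial.X 0 * tg k p - MvPolynomial.X 1 * p) := by
    rw [mul_sub'', psi_mulR0, psi_mulR1, ← psi_sub]
  have eB : MvPolynomial.X 0 * p - MvPolynomial.X 1 * sg k p =
      MvPolynomial.X 0 * tg k p - MvPolynomial.X 1 * p := by
    have h := congrArg (evL k) ((l2.symm.trans hB).trans l2')
    rwa [evL_Psi, evL_Psi] at h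
  rw [← hst] at eB
  have hps : p = sg k p := by
    have h0 : (MvPolynomial.X 0 + MvPolynomial.X 1) * (p - sg k p) = 0 := by
      linear_combination eB
    have := mulX0addX1_cancel k _ h0
    have := sub_eq_zero.mp this
    exact this
  have hpt : p = tg k p := hps.trans hst
  -- coefficients supported on even multidegrees
  have hc0 : ∀ d : Fin 2 →₀ ℕ, ¬ Even (d 0) → MvPolynomial.coeff d p = 0 := by
    intro d hodd
    have h := congrArg (MvPolynomial.coeff d) hps
    rw [coeff_sg, (Nat.not_even_iff_odd.mp hodd).neg_one_pow, neg_one_mul] at h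
    refine h2 _ ?_
    linear_combination h
  have hc1 : ∀ d : Fin 2 →₀ ℕ, ¬ Even (d 1) → MvPolynomial.coeff d p = 0 := by
    intro d hodd
    have h := congrArg (MvPolynomial.coeff d) hpt
    rw [coeff_tg, (Nat.not_even_iff_odd.mp hodd).neg_one_pow, neg_one_mul] at h
    refine h2 _ ?_
    linear_combination h
  -- conclude membership
  have hrep : Psi k p = ∑ d ∈ p.support, MvPolynomial.coeff d p • mon k d := by
    conv_lhs => rw [MvPolynomial.as_sum p]
    rw [map_sum]
    exact Finset.sum_congr rfl fun d _ => Psi_monomial k d _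
  rw [hrep]
  apply Subalgebra.sum_mem
  intro d hd
  have hne : MvPolynomial.coeff d p ≠ 0 := MvPolynomial.mem_support_iff.mp hd
  have he0 : Even (d 0) := by
    by_contra hodd
    exact hne (hc0 d hodd)
  have he1 : Even (d 1) := by
    by_contra hodd
    exact hne (hc1 d hodd)
  obtain ⟨m, hm⟩ := he0
  obtain ⟨n, hn⟩ := he1
  apply Subalgebra.smul_mem
  rw [mon, hm, hn, ← two_mul, ← two_mul, pow_mul, pow_mul]
  have m1 : X k 0 ^ 2 ∈ Algebra.adjoin k ({X k 0 ^ 2, X k 1 ^ 2} : Set (OddPoly k)) :=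
    Algebra.subset_adjoin (Set.mem_insert _ _)
  have m2 : X k 1 ^ 2 ∈ Algebra.adjoin k ({X k 0 ^ 2, X k 1 ^ 2} : Set (OddPoly k)) :=
    Algebra.subset_adjoin (Set.mem_insert_of_mem _ rfl)
  exact mul_mem (pow_mem m1 m) (pow_mem m2 n)

end Stmt11Aux

theorem stmt11 (k : Type*) [CommRing k]
    (h2 : ∀ a : k, 2 * a = 0 → a = 0)
    (s : OddPoly k ≃ₐ[k] OddPoly k)
    (hs1 : s (X k 0) = - X k 1) (hs2 : s (X k 1) = - X k 0)
    (D : OddPoly k →ₗ[k] OddPoly k)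
    (hD0 : D 1 = 0) (hD1 : D (X k 0) = 1) (hD2 : D (X k 1) = 1)
    (hDL : ∀ f g : OddPoly k, D (f * g) = D f * g + s f * D g)
 :
    ({c : OddPoly k | ∀ a ∈ LinearMap.ker D, a * c = c * a} =
      (Algebra.adjoin k ({X k 0 ^ 2, X k 1 ^ 2} : Set (OddPoly k)) : Set (OddPoly k))) ∧
    (∀ ξ : OddPoly k →+ OddPoly k,
      (∀ a ∈ LinearMap.ker D, ∀ m : OddPoly k, ξ (a * m) = a * ξ m) →
      (∀ m r : OddPoly k, ξ (m * r) = ξ m * r) →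
      ∃! c : OddPoly k,
        c ∈ Algebra.adjoin k ({X k 0 ^ 2, X k 1 ^ 2} : Set (OddPoly k)) ∧
        ∀ m : OddPoly k, ξ m = c * m) := by
  have kerA : X k 0 * X k 1 ∈ LinearMap.ker D := by
    rw [LinearMap.mem_ker, hDL, hD1, hD2, hs1, one_mul, mul_one]
    exact add_neg_cancel _
  have kerB : X k 0 - X k 1 ∈ LinearMap.ker D := by
    rw [LinearMap.mem_ker, map_sub, hD1, hD2, sub_self]
  constructor
  · ext c
    simp only [Set.mem_setOf_eq, SetLike.mem_coe]
    constructor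
    · intro hc
      exact Stmt11Aux.forward k h2 c (hc _ kerA) (hc _ kerB)
    · intro hc a _
      have hcen := Stmt11Aux.adjoin_sub_center k hc
      rw [Subalgebra.mem_center_iff] at hcen
      exact hcen a
  · intro ξ hL hR
    refine ⟨ξ 1, ⟨?_, ?_⟩, ?_⟩
    · apply Stmt11Aux.forward k h2
      · calc (X k 0 * X k 1) * ξ 1 = ξ ((X k 0 * X k 1) * 1) := (hL _ kerA 1).symm
          _ = ξ (1 * (X k 0 * X k 1)) := by rw [mul_one, one_mul]
          _ = ξ 1 * (X k 0 * X k 1) := hR 1 _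
      · calc (X k 0 - X k 1) * ξ 1 = ξ ((X k 0 - X k 1) * 1) := (hL _ kerB 1).symm
          _ = ξ (1 * (X k 0 - X k 1)) := by rw [mul_one, one_mul]
          _ = ξ 1 * (X k 0 - X k 1) := hR 1 _
    · intro m
      have h := hR 1 m
      rwa [one_mul] at h
    · rintro y ⟨_, hy2⟩
      have h := hy2 1
      rw [mul_one] at h
      exact h.symm
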